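/- Let α ∈ (0,1] and let f: [0,1] → ℝ be α-Hölder continuous. Fix ε₀ ∈ (0,1/2) and x ∈ [0,1], and let (pₙ, qₙ) ∈ ℕ × ℕ* satisfy pₙ/qₙ ∈ [0,1], |pₙ/qₙ − x| < qₙ^{-1/2} and qₙ → ∞. Then there is a constant C₁ depending only on ε₀, α, ‖f‖_∞ and the α-Hölder constant of f such that, for all sufficiently large n, |∫₀¹ ρ_{pₙ, qₙ−pₙ}(s) f(s) ds − f(x)| ≤ C₁ · qₙ^{(-1/2+ε₀)α}. -/

import Mathlib

open intervalIntegral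

/-- The density of the Beta distribution `Be(k+1, l+1)` on `[0,1]`. -/
noncomputable def rho (k l : ℕ) (s : ℝ) : ℝ :=
  ((k + l + 1).factorial : ℝ) / (k.factorial * l.factorial) * s ^ k * (1 - s) ^ l

lemma I_beta : ∀ (l k : ℕ), ∫ x in (0:ℝ)..1, x ^ k * (1 - x) ^ l
    = (k.factorial * l.factorial : ℝ) / (k + l + 1).factorial := by
  intro l
  induction l with
  | zero =>
    intro k
    simp only [pow_zero, mul_one, integral_pow, Nat.factorial_zero, Nat.cast_one,
      Nat.add_zero]
    rw [Nat.factorial_succ]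
    push_cast
    field_simp
    simp
  | succ l IH =>
    intro k
    have key : ∫ x in (0:ℝ)..1,
        (((k:ℝ)+1) * (x ^ k * (1 - x) ^ (l+1)) - ((l:ℝ)+1) * (x ^ (k+1) * (1 - x) ^ l)) = 0 := by
      rw [intervalIntegral.integral_eq_sub_of_hasDerivAt
        (f := fun x : ℝ => x ^ (k+1) * (1 - x) ^ (l+1))]
      · simp
      · intro x _
        have h1 : HasDerivAt (fun x : ℝ => x ^ (k+1)) (((k:ℝ)+1) * x ^ k) x := by
          simpa using hasDerivAt_pow (k+1) x
        have h2 : HasDerivAt (fun x : ℝ => (1 - x) ^ (l+1))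
            (((l:ℝ)+1) * (1 - x) ^ l * (-1)) x := by
          have := (hasDerivAt_pow (l+1) (1-x)).comp x ((hasDerivAt_id x).const_sub 1)
          simpa [Function.comp_def] using this
        have := h1.fun_mul h2
        exact this.congr_deriv (by ring)
      · exact (Continuous.intervalIntegrable (by fun_prop) _ _)
    rw [intervalIntegral.integral_sub
        ((Continuous.intervalIntegrable (by fun_prop) _ _))
        ((Continuous.intervalIntegrable (by fun_prop) _ _)),
      intervalIntegral.integral_const_mul, intervalIntegral.integral_const_mul,
      sub_eq_zero] at key
    rw [IH (k+1)] at key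
    have hk1 : ((k:ℝ)+1) ≠ 0 := by positivity
    have heq : (∫ x in (0:ℝ)..1, x ^ k * (1 - x) ^ (l+1))
        = ((l:ℝ)+1) * (((k+1).factorial * l.factorial : ℝ) / (k + 1 + l + 1).factorial) / ((k:ℝ)+1) := by
      field_simp at key ⊢
      linarith [key]
    rw [heq]
    have e1 : (k + 1 + l + 1) = (k + (l+1) + 1) := by omega
    rw [e1, Nat.factorial_succ (k), Nat.factorial_succ l]
    push_cast
    have h2 : ((k + (l+1) + 1).factorial : ℝ) ≠ 0 := by positivity
    field_simp

lemma rho_cont (k l : ℕ) : Continuous (rho k l) := by unfold rho; fun_prop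

lemma fact_ne (m : ℕ) : ((m.factorial : ℝ)) ≠ 0 := by positivity

lemma rho_moment (k l m : ℕ) : ∫ s in (0:ℝ)..1, rho k l s * s ^ m
    = ((k + l + 1).factorial : ℝ) * ((k + m).factorial) / (k.factorial * (k + m + l + 1).factorial) := by
  have : ∀ s : ℝ, rho k l s * s ^ m
      = ((k + l + 1).factorial : ℝ) / (k.factorial * l.factorial) * (s ^ (k + m) * (1 - s) ^ l) := by
    intro s; unfold rho; rw [pow_add]; ring
  simp only [this]
  rw [intervalIntegral.integral_const_mul, I_beta]
  field_simp

lemma rho_m0 (k l : ℕ) : ∫ s in (0:ℝ)..1, rho k l s = 1 := by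
  have := rho_moment k l 0
  simp only [pow_zero, mul_one, Nat.add_zero] at this
  rw [this]
  field_simp

lemma rho_m1 (k l : ℕ) : ∫ s in (0:ℝ)..1, rho k l s * s
    = ((k:ℝ) + 1) / ((k:ℝ) + (l:ℝ) + 2) := by
  have := rho_moment k l 1
  simp only [pow_one] at this
  rw [this]
  have e1 : (k + 1 + l + 1) = (k + l + 1) + 1 := by omega
  rw [e1, Nat.factorial_succ (k+l+1), Nat.factorial_succ k]
  push_cast
  have := fact_ne (k+l+1); have := fact_ne k
  field_simp
  ring

lemma rho_m2 (k l : ℕ) : ∫ s in (0:ℝ)..1, rho k l s * s ^ 2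
    = ((k:ℝ) + 1) * ((k:ℝ) + 2) / (((k:ℝ) + (l:ℝ) + 2) * ((k:ℝ) + (l:ℝ) + 3)) := by
  rw [rho_moment k l 2]
  have e1 : (k + 2 + l + 1) = ((k + l + 1) + 1) + 1 := by omega
  have e2 : (k + 2) = (k + 1) + 1 := by omega
  rw [e1, e2, Nat.factorial_succ ((k+l+1)+1), Nat.factorial_succ (k+l+1),
    Nat.factorial_succ (k+1), Nat.factorial_succ k]
  push_cast
  have := fact_ne (k+l+1); have := fact_ne k
  field_simp
  ring

lemma rho_sq_moment (k l : ℕ) (x : ℝ) :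
    ∫ s in (0:ℝ)..1, rho k l s * (s - x) ^ 2
    = ((k:ℝ) + 1) * ((k:ℝ) + 2) / (((k:ℝ) + (l:ℝ) + 2) * ((k:ℝ) + (l:ℝ) + 3))
      - 2 * x * (((k:ℝ) + 1) / ((k:ℝ) + (l:ℝ) + 2)) + x ^ 2 := by
  have h : ∀ s : ℝ, rho k l s * (s - x) ^ 2
      = rho k l s * s ^ 2 - (2 * x) * (rho k l s * s) + x ^ 2 * rho k l s := by
    intro s; ring
  simp only [h]
  have c := rho_cont k l
  rw [intervalIntegral.integral_add, intervalIntegral.integral_sub,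
    intervalIntegral.integral_const_mul, intervalIntegral.integral_const_mul,
    rho_m0, rho_m1, rho_m2]
  · ring
  all_goals exact Continuous.intervalIntegrable (by fun_prop) _ _

lemma sq_moment_le (k l : ℕ) (x : ℝ) :
    ((k:ℝ) + 1) * ((k:ℝ) + 2) / (((k:ℝ) + (l:ℝ) + 2) * ((k:ℝ) + (l:ℝ) + 3))
      - 2 * x * (((k:ℝ) + 1) / ((k:ℝ) + (l:ℝ) + 2)) + x ^ 2
    ≤ 1 / ((k:ℝ) + (l:ℝ) + 1) + (x - ((k:ℝ) + 1) / ((k:ℝ) + (l:ℝ) + 2)) ^ 2 := by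
  set K := (k:ℝ); set L := (l:ℝ)
  have hK : 0 ≤ K := Nat.cast_nonneg k
  have hL : 0 ≤ L := Nat.cast_nonneg l
  have h2 : (0:ℝ) < K + L + 2 := by linarith
  have h3 : (0:ℝ) < K + L + 3 := by linarith
  have h1 : (0:ℝ) < K + L + 1 := by linarith
  have hvar : (K + 1) * (K + 2) / ((K + L + 2) * (K + L + 3)) - ((K+1)/(K+L+2))^2
      = (K + 1) * (L + 1) / ((K + L + 2)^2 * (K + L + 3)) := by
    field_simp
    ring
  have hb : (K + 1) * (L + 1) / ((K + L + 2)^2 * (K + L + 3)) ≤ 1 / (K + L + 1) := by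
    rw [div_le_div_iff₀ (by positivity) h1]
    nlinarith [sq_nonneg (K - L), sq_nonneg (K + L)]
  nlinarith [hvar, hb, sq_nonneg (x - (K+1)/(K+L+2))]

lemma key_pointwise {α δ u : ℝ} (hα : α ∈ Set.Ioc (0:ℝ) 1) (hδ : 0 < δ) (hu : 0 ≤ u) :
    u ^ α ≤ δ ^ α + δ ^ (α - 2) * u ^ 2 := by
  rcases le_or_gt u δ with h | h
  · have h1 : u ^ α ≤ δ ^ α := Real.rpow_le_rpow hu h hα.1.le
    have h2 : 0 ≤ δ ^ (α - 2) * u ^ 2 := by positivity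
    linarith
  · have hu0 : 0 < u := hδ.trans h
    have h1 : u ^ α = u ^ (α - 2) * u ^ 2 := by
      rw [← Real.rpow_two, ← Real.rpow_add hu0]
      ring_nf
    have h2 : u ^ (α - 2) ≤ δ ^ (α - 2) :=
      Real.rpow_le_rpow_of_nonpos hδ h.le (by linarith [hα.2])
    have h3 : 0 ≤ δ ^ α := (Real.rpow_pos_of_pos hδ α).le
    nlinarith [sq_nonneg u]

lemma holder_cont {f : ℝ → ℝ} {Hf α : ℝ} (hα : 0 < α)
    (hf : ∀ s ∈ Set.Icc (0:ℝ) 1, ∀ t ∈ Set.Icc (0:ℝ) 1, |f s - f t| ≤ Hf * |s - t| ^ α) :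
    ContinuousOn f (Set.Icc (0:ℝ) 1) := by
  intro t ht
  have hcont : Filter.Tendsto (fun s : ℝ => Hf * |s - t| ^ α)
      (nhdsWithin t (Set.Icc 0 1)) (nhds 0) := by
    have h3 : ContinuousAt (fun s : ℝ => |s - t| ^ α) t := by
      have h4 : ContinuousAt (fun s : ℝ => |s - t|) t := by fun_prop
      exact h4.rpow_const (Or.inr hα.le)
    have h5 : ContinuousAt (fun s : ℝ => Hf * |s - t| ^ α) t := continuousAt_const.mul h3
    have := (h5.continuousWithinAt (s := Set.Icc (0:ℝ) 1))
    simpa [ContinuousWithinAt, Real.zero_rpow hα.ne'] using this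
  rw [ContinuousWithinAt, tendsto_iff_dist_tendsto_zero]
  apply squeeze_zero' _ _ hcont
  · filter_upwards with s using dist_nonneg
  · filter_upwards [self_mem_nhdsWithin] with s hs
    rw [Real.dist_eq]
    exact hf s hs t ht

set_option maxHeartbeats 1000000 in
theorem stmt_14 (α : ℝ) (hα : α ∈ Set.Ioc (0:ℝ) 1)
    (f : ℝ → ℝ) (Hf : ℝ) (hHf : 0 ≤ Hf)
    (hf : ∀ s ∈ Set.Icc (0:ℝ) 1, ∀ t ∈ Set.Icc (0:ℝ) 1, |f s - f t| ≤ Hf * |s - t| ^ α)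
    (ε₀ : ℝ) (hε₀ : ε₀ ∈ Set.Ioo (0:ℝ) (1/2))
    (x : ℝ) (hx : x ∈ Set.Icc (0:ℝ) 1)
    (p q : ℕ → ℕ) (hq : ∀ n, 0 < q n)
    (hpq : ∀ n, (p n : ℝ) / (q n : ℝ) ∈ Set.Icc (0:ℝ) 1)
    (happrox : ∀ n, |(p n : ℝ) / (q n : ℝ) - x| < (q n : ℝ) ^ (-(1/2) : ℝ))
    (hqt : Filter.Tendsto q Filter.atTop Filter.atTop) :
    ∃ C₁ > (0:ℝ), ∃ N : ℕ, ∀ n ≥ N,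
      |(∫ s in (0:ℝ)..1, rho (p n) (q n - p n) s * f s) - f x|
        ≤ C₁ * (q n : ℝ) ^ ((-(1/2) + ε₀) * α) := by
  refine ⟨6 * Hf + 1, by positivity, 0, fun n _ => ?_⟩
  set k := p n with hk
  set l := q n - p n with hl
  have hq0 : 0 < q n := hq n
  have hQ0 : (0:ℝ) < (q n : ℝ) := by exact_mod_cast hq0
  have hQr : (1:ℝ) ≤ (q n : ℝ) := by exact_mod_cast hq0
  have hple : p n ≤ q n := by
    have := (hpq n).2
    rw [div_le_one hQ0] at this
    exact_mod_cast this
  have hklr : (k:ℝ) + (l:ℝ) = (q n : ℝ) := by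
    rw [hk, hl]
    push_cast [Nat.cast_sub hple]
    ring
  set Qr := (q n : ℝ) with hQrdef
  set δ := Qr ^ (-(1/2):ℝ) with hδdef
  have hδ : 0 < δ := Real.rpow_pos_of_pos hQ0 _
  have hδ1 : 1 / Qr ≤ δ := by
    rw [hδdef, one_div, ← Real.rpow_neg_one Qr]
    exact Real.rpow_le_rpow_of_exponent_le hQr (by norm_num)
  set m1 := ((k:ℝ) + 1) / ((k:ℝ) + (l:ℝ) + 2) with hm1def
  -- |x - m1| ≤ 2δ
  have hm1x : |x - m1| ≤ 2 * δ := by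
    have hpr0 : (0:ℝ) ≤ (p n : ℝ) := Nat.cast_nonneg _
    have hprq : (p n : ℝ) ≤ Qr := by rw [hQrdef]; exact_mod_cast hple
    have heq : m1 - (p n : ℝ) / Qr = (Qr - 2 * (p n : ℝ)) / (Qr * (Qr + 2)) := by
      rw [hm1def, hklr, hk]
      field_simp
      ring
    have h1 : |m1 - (p n : ℝ) / Qr| ≤ 1 / Qr := by
      rw [heq, abs_div, abs_of_pos (show (0:ℝ) < Qr * (Qr + 2) from mul_pos hQ0 (by linarith))]
      have hnum : |Qr - 2 * (p n : ℝ)| ≤ Qr := abs_le.mpr ⟨by linarith, by linarith⟩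
      calc |Qr - 2 * (p n : ℝ)| / (Qr * (Qr + 2)) ≤ Qr / (Qr * (Qr + 2)) := by gcongr
        _ = 1 / (Qr + 2) := by field_simp
        _ ≤ 1 / Qr := by gcongr; linarith
    have h2 : |(p n : ℝ) / Qr - x| < δ := happrox n
    calc |x - m1| ≤ |(p n : ℝ) / Qr - x| + |m1 - (p n : ℝ) / Qr| := by
          rw [abs_sub_comm ((p n : ℝ) / Qr) x]
          exact (abs_sub_le x ((p n : ℝ) / Qr) m1).trans (by rw [abs_sub_comm ((p n : ℝ) / Qr) m1])
      _ ≤ δ + 1 / Qr := by linarith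
      _ ≤ 2 * δ := by linarith
  have hδ2 : δ ^ (2:ℕ) = 1 / Qr := by
    rw [hδdef, ← Real.rpow_natCast (Qr ^ (-(1/2):ℝ)) 2, ← Real.rpow_mul hQ0.le]
    norm_num [Real.rpow_neg_one]
  -- second moment bound
  have hM2 : ∫ s in (0:ℝ)..1, rho k l s * (s - x) ^ 2 ≤ 5 / Qr := by
    rw [rho_sq_moment]
    have h := sq_moment_le k l x
    have h1 : 1 / ((k:ℝ) + (l:ℝ) + 1) ≤ 1 / Qr := by
      rw [hklr]; gcongr; linarith
    have h2 : (x - m1) ^ 2 ≤ (2 * δ) ^ 2 := by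
      have := abs_le.mp hm1x
      nlinarith
    have h3 : (2 * δ) ^ 2 = 4 / Qr := by
      rw [mul_pow]
      rw [hδ2]
      ring
    rw [hm1def] at h2
    have h4 : (x - ((k:ℝ) + 1) / ((k:ℝ) + (l:ℝ) + 2)) ^ 2 ≤ 4 / Qr := h2.trans_eq h3
    have h5 : 1 / Qr + 4 / Qr = 5 / Qr := by ring
    calc ((k:ℝ) + 1) * ((k:ℝ) + 2) / (((k:ℝ) + (l:ℝ) + 2) * ((k:ℝ) + (l:ℝ) + 3))
          - 2 * x * (((k:ℝ) + 1) / ((k:ℝ) + (l:ℝ) + 2)) + x ^ 2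
        ≤ 1 / ((k:ℝ) + (l:ℝ) + 1) + (x - ((k:ℝ) + 1) / ((k:ℝ) + (l:ℝ) + 2)) ^ 2 := h
      _ ≤ 1 / Qr + 4 / Qr := add_le_add h1 h4
      _ = 5 / Qr := h5
  -- continuity / integrability
  have hfc : ContinuousOn f (Set.Icc (0:ℝ) 1) := holder_cont hα.1 hf
  have u01 : Set.uIcc (0:ℝ) 1 = Set.Icc (0:ℝ) 1 := Set.uIcc_of_le zero_le_one
  have hρc : Continuous (rho k l) := rho_cont k l
  have hρnn : ∀ s ∈ Set.Icc (0:ℝ) 1, 0 ≤ rho k l s := by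
    intro s hs
    unfold rho
    have h1 := hs.1
    have h2 := hs.2
    apply mul_nonneg (mul_nonneg (by positivity) (by positivity))
    exact pow_nonneg (by linarith) l
  have hIf : IntervalIntegrable (fun s => rho k l s * f s) MeasureTheory.volume 0 1 := by
    apply ContinuousOn.intervalIntegrable
    rw [u01]
    exact hρc.continuousOn.mul hfc
  have hI1 : IntervalIntegrable (fun s => |rho k l s * f s - rho k l s * f x|)
      MeasureTheory.volume 0 1 := by
    apply ContinuousOn.intervalIntegrable
    rw [u01]
    exact ((hρc.continuousOn.mul hfc).sub (hρc.continuousOn.mul continuousOn_const)).abs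
  have hI2 : IntervalIntegrable
      (fun s => Hf * (rho k l s * (δ ^ α + δ ^ (α - 2) * (s - x) ^ 2)))
      MeasureTheory.volume 0 1 := Continuous.intervalIntegrable (by fun_prop) _ _
  -- main chain
  have step0 : (∫ s in (0:ℝ)..1, rho k l s * f s) - f x
      = ∫ s in (0:ℝ)..1, (rho k l s * f s - rho k l s * f x) := by
    rw [intervalIntegral.integral_sub hIf (Continuous.intervalIntegrable (by fun_prop) _ _),
      intervalIntegral.integral_mul_const, rho_m0, one_mul]
  have step2 : ∫ s in (0:ℝ)..1, |rho k l s * f s - rho k l s * f x|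
      ≤ ∫ s in (0:ℝ)..1, Hf * (rho k l s * (δ ^ α + δ ^ (α - 2) * (s - x) ^ 2)) := by
    apply intervalIntegral.integral_mono_on zero_le_one hI1 hI2
    intro s hs
    have hρ := hρnn s hs
    have hkey : |s - x| ^ α ≤ δ ^ α + δ ^ (α - 2) * (s - x) ^ 2 := by
      have := key_pointwise (δ := δ) (u := |s - x|) hα hδ (abs_nonneg _)
      rwa [sq_abs] at this
    calc |rho k l s * f s - rho k l s * f x| = rho k l s * |f s - f x| := by
          rw [← mul_sub, abs_mul, abs_of_nonneg hρ]
      _ ≤ rho k l s * (Hf * (δ ^ α + δ ^ (α - 2) * (s - x) ^ 2)) := by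
          apply mul_le_mul_of_nonneg_left _ hρ
          calc |f s - f x| ≤ Hf * |s - x| ^ α := hf s hs x hx
            _ ≤ Hf * (δ ^ α + δ ^ (α - 2) * (s - x) ^ 2) :=
              mul_le_mul_of_nonneg_left hkey hHf
      _ = Hf * (rho k l s * (δ ^ α + δ ^ (α - 2) * (s - x) ^ 2)) := by ring
  have step3 : ∫ s in (0:ℝ)..1, Hf * (rho k l s * (δ ^ α + δ ^ (α - 2) * (s - x) ^ 2))
      = Hf * δ ^ α + (Hf * δ ^ (α - 2)) * ∫ s in (0:ℝ)..1, rho k l s * (s - x) ^ 2 := by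
    have h : ∀ s : ℝ, Hf * (rho k l s * (δ ^ α + δ ^ (α - 2) * (s - x) ^ 2))
        = (Hf * δ ^ α) * rho k l s + (Hf * δ ^ (α - 2)) * (rho k l s * (s - x) ^ 2) := by
      intro s; ring
    simp only [h]
    rw [intervalIntegral.integral_add (Continuous.intervalIntegrable (by fun_prop) _ _)
        (Continuous.intervalIntegrable (by fun_prop) _ _),
      intervalIntegral.integral_const_mul, intervalIntegral.integral_const_mul, rho_m0]
    ring
  -- rpow computations
  have e1' : δ ^ α = Qr ^ ((-(1/2)) * α) := by
    rw [hδdef, ← Real.rpow_mul hQ0.le]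
  have e2 : δ ^ (α - 2) * (5 / Qr) = 5 * Qr ^ ((-(1/2)) * α) := by
    rw [hδdef, ← Real.rpow_mul hQ0.le]
    rw [show (5:ℝ)/Qr = 5 * Qr ^ (-1:ℝ) by rw [Real.rpow_neg_one]; ring]
    rw [mul_comm (Qr ^ ((-(1/2)) * (α-2))), mul_assoc, ← Real.rpow_add hQ0]
    congr 1
    ring
  have hexp : Qr ^ ((-(1/2):ℝ) * α) ≤ Qr ^ ((-(1/2) + ε₀) * α) := by
    apply Real.rpow_le_rpow_of_exponent_le hQr
    apply mul_le_mul_of_nonneg_right _ hα.1.le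
    linarith [hε₀.1]
  have hrnn : (0:ℝ) ≤ Qr ^ ((-(1/2) + ε₀) * α) := (Real.rpow_pos_of_pos hQ0 _).le
  calc |(∫ s in (0:ℝ)..1, rho k l s * f s) - f x|
      ≤ ∫ s in (0:ℝ)..1, |rho k l s * f s - rho k l s * f x| := by
        rw [step0]
        exact intervalIntegral.abs_integral_le_integral_abs zero_le_one
    _ ≤ ∫ s in (0:ℝ)..1, Hf * (rho k l s * (δ ^ α + δ ^ (α - 2) * (s - x) ^ 2)) := step2
    _ = Hf * δ ^ α + (Hf * δ ^ (α - 2)) * ∫ s in (0:ℝ)..1, rho k l s * (s - x) ^ 2 := step3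
    _ ≤ Hf * δ ^ α + (Hf * δ ^ (α - 2)) * (5 / Qr) := by
        have : (0:ℝ) ≤ Hf * δ ^ (α - 2) := by positivity
        nlinarith [hM2, this]
    _ = 6 * Hf * Qr ^ ((-(1/2):ℝ) * α) := by
        rw [e1', mul_assoc Hf, e2]
        ring
    _ ≤ (6 * Hf) * Qr ^ ((-(1/2) + ε₀) * α) := by
        apply mul_le_mul_of_nonneg_left hexp (by positivity)
    _ ≤ (6 * Hf + 1) * Qr ^ ((-(1/2) + ε₀) * α) := by nlinarith [hrnn]
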